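/- Suppose that for any characters φ, ψ on F₂ with φ(g)ψ(g) = 0 for all g ≠ e and with ker(φ) = ker(ψ) = {e}, one has φ = δ_e or ψ = δ_e. Then F₂ has the non-factorizable regular character property (the same conclusion without the kernel assumption). -/

import Mathlib

open scoped BigOperators ComplexOrder

/-- A character on a group `G`: a normalized, conjugation-invariant,
positive definite complex-valued function. -/
def IsCharacter {G : Type*} [Group G] (χ : G → ℂ) : Prop :=
  χ 1 = 1 ∧ (∀ g h : G, χ (h * g * h⁻¹) = χ g) ∧
    ∀ (n : ℕ) (g : Fin n → G) (α : Fin n → ℂ),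
      0 ≤ ∑ i, ∑ j, (starRingEnd ℂ) (α i) * α j * χ ((g i)⁻¹ * g j)

section Aux

variable {G : Type*} [Group G]

open Complex

/-- The 2×2 positive-definiteness instance. -/
lemma IsCharacter.psd_two {χ : G → ℂ} (hχ : IsCharacter χ) (g : G) (a b : ℂ) :
    0 ≤ (starRingEnd ℂ) a * a + (starRingEnd ℂ) a * b * χ g
      + (starRingEnd ℂ) b * a * χ g⁻¹ + (starRingEnd ℂ) b * b := by
  have h := hχ.2.2 2 ![1, g] ![a, b]
  simpa [Fin.sum_univ_two, hχ.1, mul_comm, mul_assoc, mul_left_comm, add_comm,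
    add_assoc, add_left_comm] using h

lemma IsCharacter.inv_eq_conj {χ : G → ℂ} (hχ : IsCharacter χ) (g : G) :
    χ g⁻¹ = (starRingEnd ℂ) (χ g) := by
  have h1 := hχ.psd_two g 1 1
  have h2 := hχ.psd_two g 1 Complex.I
  simp only [map_one, one_mul, mul_one, Complex.le_def, Complex.zero_re, Complex.zero_im] at h1 h2
  have e1 := h1.2
  have e2 := h2.2
  simp only [Complex.add_im, Complex.one_im, Complex.mul_im, Complex.I_re, Complex.I_im,
    Complex.conj_re, Complex.conj_im, Complex.one_re, Complex.mul_re] at e1 e2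
  apply Complex.ext <;>
    simp only [Complex.conj_re, Complex.conj_im] <;> nlinarith [e1, e2]

lemma IsCharacter.re_le_one {χ : G → ℂ} (hχ : IsCharacter χ) (g : G) :
    (χ g).re ≤ 1 := by
  have h1 := hχ.psd_two g 1 (-1)
  rw [hχ.inv_eq_conj g] at h1
  simp only [map_one, map_neg, one_mul, mul_one, neg_mul, mul_neg, neg_neg,
    Complex.le_def, Complex.zero_re, Complex.zero_im] at h1
  have := h1.1
  simp only [Complex.add_re, Complex.one_re, Complex.neg_re, Complex.conj_re] at this
  linarith

/-- Any function that is `1` at the identity and `0` elsewhere is a character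
(the regular character). -/
lemma dirac_isCharacter {D : G → ℂ} (hD1 : D 1 = 1) (hD0 : ∀ g : G, g ≠ 1 → D g = 0) :
    IsCharacter D := by
  classical
  have hDval : ∀ x : G, D x = if x = 1 then 1 else 0 := by
    intro x
    by_cases hx : x = 1
    · simp [hx, hD1]
    · simp [hx, hD0 x hx]
  refine ⟨hD1, ?_, ?_⟩
  · intro g h
    rw [hDval, hDval]
    by_cases hg : g = 1
    · simp [hg]
    · rw [if_neg hg, if_neg (by simp [hg])]
  · intro n g α
    have key : ∀ i j : Fin n, (starRingEnd ℂ) (α i) * α j * D ((g i)⁻¹ * g j)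
        = ∑ x ∈ Finset.univ.image g,
            (if g i = x then (starRingEnd ℂ) (α i) else 0) * (if g j = x then α j else 0) := by
      intro i j
      rw [hDval, inv_mul_eq_one]
      by_cases hij : g i = g j
      · rw [if_pos hij, mul_one, Finset.sum_eq_single (g i)]
        · rw [if_pos rfl, if_pos hij.symm]
        · intro x _ hne
          rw [if_neg (show ¬(g i = x) from fun hh => hne hh.symm), zero_mul]
        · intro habs
          exact absurd (Finset.mem_image_of_mem g (Finset.mem_univ i)) habs
      · rw [if_neg hij, mul_zero]
        symm
        apply Finset.sum_eq_zero
        intro x _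
        by_cases h1 : g i = x
        · rw [if_neg (show ¬(g j = x) from fun hh => hij (h1.trans hh.symm)), mul_zero]
        · rw [if_neg (show ¬(g i = x) from h1), zero_mul]
    calc 0 ≤ ∑ x ∈ Finset.univ.image g,
          (starRingEnd ℂ) (∑ i, if g i = x then α i else 0) * (∑ j, if g j = x then α j else 0) := by
          apply Finset.sum_nonneg
          intro x _
          exact star_mul_self_nonneg _
      _ = ∑ x ∈ Finset.univ.image g,
          (∑ i, if g i = x then (starRingEnd ℂ) (α i) else 0) * (∑ j, if g j = x then α j else 0) := by
          apply Finset.sum_congr rfl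
          intro x _
          rw [map_sum]
          congr 1
          apply Finset.sum_congr rfl
          intro i _
          rw [apply_ite (starRingEnd ℂ), map_zero]
      _ = ∑ x ∈ Finset.univ.image g, ∑ i, ∑ j,
          (if g i = x then (starRingEnd ℂ) (α i) else 0) * (if g j = x then α j else 0) := by
          apply Finset.sum_congr rfl
          intro x _
          rw [Finset.sum_mul_sum]
      _ = ∑ i, ∑ j, (starRingEnd ℂ) (α i) * α j * D ((g i)⁻¹ * g j) := by
          rw [Finset.sum_comm]
          apply Finset.sum_congr rfl
          intro i _
          rw [Finset.sum_comm]
          apply Finset.sum_congr rfl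
          intro j _
          exact (key i j).symm

/-- The average of two characters is a character. -/
lemma avg_isCharacter {φ ψ : G → ℂ} (hφ : IsCharacter φ) (hψ : IsCharacter ψ) :
    IsCharacter (fun g => (φ g + ψ g) / 2) := by
  refine ⟨by norm_num [hφ.1, hψ.1], ?_, ?_⟩
  · intro g h
    simp only [hφ.2.1, hψ.2.1]
  · intro n g α
    have hsum : ∑ i, ∑ j, (starRingEnd ℂ) (α i) * α j * ((φ ((g i)⁻¹ * g j) + ψ ((g i)⁻¹ * g j)) / 2)
        = (1/2) * ((∑ i, ∑ j, (starRingEnd ℂ) (α i) * α j * φ ((g i)⁻¹ * g j))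
          + (∑ i, ∑ j, (starRingEnd ℂ) (α i) * α j * ψ ((g i)⁻¹ * g j))) := by
      rw [mul_add, Finset.mul_sum, Finset.mul_sum, ← Finset.sum_add_distrib]
      apply Finset.sum_congr rfl
      intro i _
      rw [Finset.mul_sum, Finset.mul_sum, ← Finset.sum_add_distrib]
      apply Finset.sum_congr rfl
      intro j _
      ring
    rw [hsum]
    apply mul_nonneg
    · rw [Complex.le_def]
      norm_num
    · exact add_nonneg (hφ.2.2 n g α) (hψ.2.2 n g α)

end Aux

open scoped Classical in
/-- The regular character of `G` is non-factorizable: whenever two characters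
`φ, ψ` satisfy `φ s * ψ s = 0` for every `s ≠ 1`, one of them is `δ_e`. -/
def HasNonfactorizableRegularCharacter (G : Type*) [Group G] : Prop :=
  ∀ φ ψ : G → ℂ, IsCharacter φ → IsCharacter ψ →
    (∀ s : G, s ≠ 1 → φ s * ψ s = 0) →
    (φ = fun g => if g = 1 then 1 else 0) ∨ (ψ = fun g => if g = 1 then 1 else 0)

open scoped Classical in
theorem freeGroup_nfrc_of_trivial_kernel_case
    (h : ∀ φ ψ : FreeGroup (Fin 2) → ℂ, IsCharacter φ → IsCharacter ψ →
      (∀ g : FreeGroup (Fin 2), g ≠ 1 → φ g * ψ g = 0) →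
      ({g : FreeGroup (Fin 2) | φ g = 1} = {1}) →
      ({g : FreeGroup (Fin 2) | ψ g = 1} = {1}) →
      (φ = fun g => if g = 1 then 1 else 0) ∨ (ψ = fun g => if g = 1 then 1 else 0)) :
    HasNonfactorizableRegularCharacter (FreeGroup (Fin 2)) := by
  intro φ ψ hφ hψ hprod
  set D : FreeGroup (Fin 2) → ℂ := fun g => if g = 1 then 1 else 0 with hDdef
  have hD1 : D 1 = 1 := by simp [hDdef]
  have hD0 : ∀ g : FreeGroup (Fin 2), g ≠ 1 → D g = 0 := by
    intro g hg
    simp only [hDdef]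
    rw [if_neg hg]
  have hDchar := dirac_isCharacter hD1 hD0
  have hφ' := avg_isCharacter hφ hDchar
  have hψ' := avg_isCharacter hψ hDchar
  have hprod' : ∀ g : FreeGroup (Fin 2), g ≠ 1 →
      (fun g => (φ g + D g) / 2) g * (fun g => (ψ g + D g) / 2) g = 0 := by
    intro g hg
    have : (φ g + D g) / 2 * ((ψ g + D g) / 2) = φ g * ψ g / 4 + (φ g + ψ g + D g) * D g / 4 := by
      ring
    simp only [this, hprod g hg, hD0 g hg, mul_zero, zero_div, add_zero]
    rw [div_mul_div_comm, hprod g hg, zero_div]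
  have hker : ∀ χ : FreeGroup (Fin 2) → ℂ, IsCharacter χ →
      ({g : FreeGroup (Fin 2) | (fun g => (χ g + D g) / 2) g = 1} = {1}) := by
    intro χ hχ
    ext g
    simp only [Set.mem_setOf_eq, Set.mem_singleton_iff]
    constructor
    · intro hg
      by_contra hne
      rw [hD0 g hne, add_zero] at hg
      have h2 : χ g = 2 := by
        field_simp at hg
        linear_combination hg
      have := hχ.re_le_one g
      rw [h2] at this
      norm_num at this
    · rintro rfl
      rw [hD1, hχ.1]
      norm_num
  rcases h _ _ hφ' hψ' hprod' (hker φ hφ) (hker ψ hψ) with hc | hc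
  · left
    funext g
    by_cases hg : g = 1
    · rw [hg, hφ.1, if_pos rfl]
    · rw [if_neg hg]
      have hcg := congrFun hc g
      rw [hD0 g hg, add_zero] at hcg
      field_simp at hcg
      simpa using hcg
  · right
    funext g
    by_cases hg : g = 1
    · rw [hg, hψ.1, if_pos rfl]
    · rw [if_neg hg]
      have hcg := congrFun hc g
      rw [hD0 g hg, add_zero] at hcg
      field_simp at hcg
      simpa using hcg
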